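/- Let Y be a positive tubal vector (each of its n tubal-scalar components is nonnegative and nonzero) and X a nonnegative tubal vector with X ≠ 0. Then Yᵀ * X = Σ_{i=1}^n y_iᵀ * x_i is a positive tubal scalar (nonnegative and nonzero). -/

import Mathlib

open Finset

/-- The t-product (circular convolution) of tubal scalars of length `p`. -/
def tConv {p : ℕ} (a b : Fin p → ℝ) : Fin p → ℝ :=
  fun i => ∑ j : Fin p, a j * b (i - j)

/-- A tubal scalar is nonnegative if every entry is nonnegative. -/
def TNonneg {p : ℕ} (a : Fin p → ℝ) : Prop := ∀ i, 0 ≤ a i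

/-- A tubal scalar is positive if it is nonnegative and not identically zero. -/
def TPos {p : ℕ} (a : Fin p → ℝ) : Prop := TNonneg a ∧ a ≠ 0

/-- The transpose of a tubal scalar: keep the first entry, reverse entries 2 through p. -/
def tTrans {p : ℕ} (a : Fin p → ℝ) : Fin p → ℝ := fun i => a (-i)

/-- If `Y` is a positive tubal vector and `X` a nonnegative nonzero tubal vector,
then `Yᵀ * X = Σ_i y_iᵀ * x_i` is a positive tubal scalar. -/
theorem tT_mul_pos {n p : ℕ} (Y X : Fin n → Fin p → ℝ)
    (hY : ∀ i, TPos (Y i)) (hX : ∀ i, TNonneg (X i)) (hX0 : X ≠ 0) :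
    TPos (∑ i : Fin n, tConv (tTrans (Y i)) (X i)) := by
  have hterm : ∀ (m : Fin n) (i j : Fin p), 0 ≤ tTrans (Y m) j * X m (i - j) := by
    intro m i j
    exact mul_nonneg ((hY m).1 _) (hX m _)
  constructor
  · intro i
    rw [Finset.sum_apply]
    refine Finset.sum_nonneg fun m _ => ?_
    exact Finset.sum_nonneg fun j _ => hterm m i j
  · -- find a positive entry
    have : ∃ i0, X i0 ≠ 0 := by
      by_contra h
      push_neg at h
      exact hX0 (funext fun i => h i)
    obtain ⟨i0, hi0⟩ := this
    have : ∃ k, X i0 k ≠ 0 := by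
      by_contra h
      push_neg at h
      exact hi0 (funext h)
    obtain ⟨k, hk⟩ := this
    have hkpos : 0 < X i0 k := lt_of_le_of_ne (hX i0 k) (Ne.symm hk)
    have : ∃ j0, Y i0 j0 ≠ 0 := by
      by_contra h
      push_neg at h
      exact (hY i0).2 (funext h)
    obtain ⟨j0, hj0⟩ := this
    have hjpos : 0 < Y i0 j0 := lt_of_le_of_ne ((hY i0).1 j0) (Ne.symm hj0)
    intro hzero
    have hval : (∑ i : Fin n, tConv (tTrans (Y i)) (X i)) (k - j0) = 0 := by
      rw [hzero]; rfl
    have hpos : 0 < (∑ i : Fin n, tConv (tTrans (Y i)) (X i)) (k - j0) := by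
      rw [Finset.sum_apply]
      refine Finset.sum_pos' (fun m _ => Finset.sum_nonneg fun j _ => hterm m _ j)
        ⟨i0, Finset.mem_univ _, ?_⟩
      refine Finset.sum_pos' (fun j _ => hterm i0 _ j) ⟨-j0, Finset.mem_univ _, ?_⟩
      have h1 : tTrans (Y i0) (-j0) = Y i0 j0 := by simp [tTrans]
      haveI : NeZero p := ⟨(Fin.pos k).ne'⟩
      have h2 : (k - j0 - -j0 : Fin p) = k := by rw [sub_neg_eq_add, sub_add_cancel]
      rw [h1, h2]
      exact mul_pos hjpos hkpos
    exact absurd hval (ne_of_gt hpos)
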